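/- arXiv:1505.00534 — 2 statements merged into one kernel-verified Lean document; each statement's English description precedes it below -/
import Mathlib

section
/- Define b(a,b,c,d) = (1/2)(1 + ⟨ν(a,d), ν(b,c)⟩) for boundary points with a ≠ d and b ≠ c. Then for pairwise distinct boundary points a, b, c, d one has the cocycle identity ν(a,d) = b(d,b,c,a)·ν(a,b) + b(a,b,c,d)·ν(a,c). -/
noncomputable section

/-- Vectors of Minkowski space `ℝ^{2,1}`. -/
abbrev V3 := Fin 3 → ℝ

/-- The Minkowski bilinear form of signature (2,1), given by `diag(1,1,-1)`. -/
def mink (v w : V3) : ℝ := v 0 * w 0 + v 1 * w 1 - v 2 * w 2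

/-- The Minkowski cross product: `⟨crossM a b, c⟩ = det(a,b,c)`. -/
def crossM (a b : V3) : V3 :=
  ![a 1 * b 2 - a 2 * b 1, a 2 * b 0 - a 0 * b 2, -(a 0 * b 1 - a 1 * b 0)]

/-- The neutral vector `ν(a,b)`: the unit spacelike vector orthogonal to the
oriented geodesic plane spanned by the null vectors `a` and `b`, oriented so that
for `a = (0,-1,1)`, `b = (0,1,1)` we get `ν(a,b) = (1,0,0)`. -/
def nu (a b : V3) : V3 :=
  (Real.sqrt (mink (crossM b a) (crossM b a)))⁻¹ • crossM b a

/-- A future-pointing null vector, representing a boundary point of `ℍ`. -/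
def FutureNull (v : V3) : Prop := mink v v = 0 ∧ 0 < v 2

/-- Two null vectors represent distinct boundary points iff they are not proportional. -/
def DistinctRays (a b : V3) : Prop := ¬ ∃ t : ℝ, b = t • a

lemma mink_neg (a b : V3) (ha : FutureNull a) (hb : FutureNull b)
    (h : DistinctRays a b) : mink a b < 0 := by
  obtain ⟨ha0, ha2⟩ := ha
  obtain ⟨hb0, hb2⟩ := hb
  simp only [mink] at ha0 hb0 ⊢
  by_contra hle
  push_neg at hle
  apply h
  have key : a 0 * b 1 - a 1 * b 0 = 0 := by
    nlinarith [sq_nonneg (a 0 * b 1 - a 1 * b 0), mul_pos ha2 hb2,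
      sq_nonneg (a 0 * b 0 + a 1 * b 1 - a 2 * b 2)]
  have heq : a 0 * b 0 + a 1 * b 1 = a 2 * b 2 := by
    nlinarith [sq_nonneg (a 0 * b 1 - a 1 * b 0), mul_pos ha2 hb2]
  have ha2' : a 2 ≠ 0 := ne_of_gt ha2
  have h1 : a 2 * b 0 = a 0 * b 2 := by
    apply mul_left_cancel₀ ha2'
    linear_combination a 0 * heq - b 0 * ha0 - a 1 * key
  have h2 : a 2 * b 1 = a 1 * b 2 := by
    apply mul_left_cancel₀ ha2'
    linear_combination a 1 * heq - b 1 * ha0 + a 0 * key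
  refine ⟨b 2 / a 2, ?_⟩
  funext i
  fin_cases i <;> simp [Pi.smul_apply] <;> field_simp <;> linarith

lemma sqrt_eq (a b : V3) (ha : FutureNull a) (hb : FutureNull b)
    (h : mink a b < 0) :
    Real.sqrt (mink (crossM b a) (crossM b a)) = -(mink a b) := by
  have hq : mink (crossM b a) (crossM b a) = (mink a b) ^ 2 := by
    have h1 := ha.1
    have h2 := hb.1
    simp only [mink, crossM] at *
    simp only [Matrix.cons_val_zero, Matrix.cons_val_one, Matrix.head_cons,
      Matrix.cons_val_two, Matrix.tail_cons]
    nlinarith [h1, h2, sq_nonneg (a 0)]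
  rw [hq, Real.sqrt_sq_eq_abs, abs_of_neg h]

lemma mink_smul (x y : ℝ) (v w : V3) :
    mink (x • v) (y • w) = x * y * mink v w := by
  simp only [mink, Pi.smul_apply, smul_eq_mul]; ring

set_option maxHeartbeats 1000000 in
set_option maxRecDepth 10000 in

private lemma core0 (a b c d : Fin 3 → ℝ)
  (hA : a 0 * a 0 + a 1 * a 1 - a 2 * a 2 = 0)
  (hB : b 0 * b 0 + b 1 * b 1 - b 2 * b 2 = 0)
  (hC : c 0 * c 0 + c 1 * c 1 - c 2 * c 2 = 0) :
  2 * (a 0 * b 0 + a 1 * b 1 - a 2 * b 2) * (a 0 * c 0 + a 1 * c 1 - a 2 * c 2) * (b 0 * c 0 + b 1 * c 1 - b 2 * c 2) * (d 1 * a 2 - d 2 * a 1) =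
    ((a 0 * d 0 + a 1 * d 1 - a 2 * d 2) * (b 0 * c 0 + b 1 * c 1 - b 2 * c 2) - ((d 1 * a 2 - d 2 * a 1) * (c 1 * b 2 - c 2 * b 1) + (d 2 * a 0 - d 0 * a 2) * (c 2 * b 0 - c 0 * b 2) - (-(d 0 * a 1 - d 1 * a 0)) * (-(c 0 * b 1 - c 1 * b 0)))) * (a 0 * c 0 + a 1 * c 1 - a 2 * c 2) * (b 1 * a 2 - b 2 * a 1) +
    ((a 0 * d 0 + a 1 * d 1 - a 2 * d 2) * (b 0 * c 0 + b 1 * c 1 - b 2 * c 2) + ((d 1 * a 2 - d 2 * a 1) * (c 1 * b 2 - c 2 * b 1) + (d 2 * a 0 - d 0 * a 2) * (c 2 * b 0 - c 0 * b 2) - (-(d 0 * a 1 - d 1 * a 0)) * (-(c 0 * b 1 - c 1 * b 0)))) * (a 0 * b 0 + a 1 * b 1 - a 2 * b 2) * (c 1 * a 2 - c 2 * a 1) := by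
  linear_combination (-((-2) * a 2 * b 2 * b 2 * c 2 * c 2 * d 1 + (1) * a 2 * b 2 * b 2 * c 1 * c 2 * d 2 + (1) * a 2 * b 2 * b 2 * c 1 * c 1 * d 1 + (1) * a 2 * b 2 * b 2 * c 0 * c 1 * d 0 + (1) * a 2 * b 1 * b 2 * c 2 * c 2 * d 2 + (-1) * a 2 * b 1 * b 2 * c 1 * c 1 * d 2 + (-1) * a 2 * b 1 * b 2 * c 0 * c 2 * d 0 + (1) * a 2 * b 1 * b 1 * c 2 * c 2 * d 1 + (-1) * a 2 * b 1 * b 1 * c 1 * c 2 * d 2 + (-1) * a 2 * b 0 * b 2 * c 1 * c 2 * d 0 + (2) * a 2 * b 0 * b 2 * c 0 * c 2 * d 1 + (-1) * a 2 * b 0 * b 2 * c 0 * c 1 * d 2 + (1) * a 2 * b 0 * b 1 * c 2 * c 2 * d 0 + (-1) * a 2 * b 0 * b 1 * c 0 * c 2 * d 2 + (1) * a 1 * b 2 * b 2 * c 1 * c 2 * d 1 + (-1) * a 1 * b 2 * b 2 * c 1 * c 1 * d 2 + (1) * a 1 * b 1 * b 2 * c 2 * c 2 * d 1 + (-1) *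 a 1 * b 1 * b 2 * c 1 * c 1 * d 1 + (-1) * a 1 * b 1 * b 2 * c 0 * c 1 * d 0 + (-1) * a 1 * b 1 * b 1 * c 2 * c 2 * d 2 + (-1) * a 1 * b 1 * b 1 * c 1 * c 2 * d 1 + (2) * a 1 * b 1 * b 1 * c 1 * c 1 * d 2 + (1) * a 1 * b 1 * b 1 * c 0 * c 2 * d 0 + (1) * a 1 * b 0 * b 2 * c 1 * c 1 * d 0 + (-1) * a 1 * b 0 * b 2 * c 0 * c 1 * d 1 + (-1) * a 1 * b 0 * b 1 * c 1 * c 2 * d 0 + (-1) * a 1 * b 0 * b 1 * c 0 * c 2 * d 1 + (2) * a 1 * b 0 * b 1 * c 0 * c 1 * d 2 + (-1) * a 0 * b 2 * b 2 * c 1 * c 2 * d 0 + (2) * a 0 * b 2 * b 2 * c 0 * c 2 * d 1 + (-1) * a 0 * b 2 * b 2 * c 0 * c 1 * d 2 + (-1) * a 0 * b 1 * b 2 * c 2 * c 2 * d 0 + (1) * a 0 * b 1 * b 2 * c 1 * c 1 * d 0 + (1) * a 0 * b 1 * b 2 * c 0 * c 0 * d 0 + (1) * a 0 * b 1 * b 1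 * c 1 * c 2 * d 0 + (-2) * a 0 * b 1 * b 1 * c 0 * c 2 * d 1 + (1) * a 0 * b 1 * b 1 * c 0 * c 1 * d 2 + (2) * a 0 * b 0 * b 2 * c 2 * c 2 * d 1 + (-2) * a 0 * b 0 * b 2 * c 1 * c 1 * d 1 + (-2) * a 0 * b 0 * b 2 * c 0 * c 0 * d 1 + (-1) * a 0 * b 0 * b 1 * c 2 * c 2 * d 2 + (1) * a 0 * b 0 * b 1 * c 1 * c 1 * d 2 + (1) * a 0 * b 0 * b 1 * c 0 * c 0 * d 2 + (1) * a 0 * b 0 * b 0 * c 1 * c 2 * d 0 + (-2) * a 0 * b 0 * b 0 * c 0 * c 2 * d 1 + (1) * a 0 * b 0 * b 0 * c 0 * c 1 * d 2)) * hA + (-((2) * a 0 * a 1 * a 2 * c 2 * c 2 * d 0 + (-1) * a 0 * a 1 * a 2 * c 0 * c 2 * d 2 + (-1) * a 0 * a 1 * a 2 * c 0 * c 1 * d 1 + (-1) * a 0 * a 1 * a 2 * c 0 * c 0 * d 0 + (-2) * a 0 * a 1 * a 1 * c 1 * c 2 * d 0 + (1) * a 0 * a 1 * a 1 * c 0 *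 c 2 * d 1 + (1) * a 0 * a 1 * a 1 * c 0 * c 1 * d 2 + (-2) * a 0 * a 0 * a 2 * c 2 * c 2 * d 1 + (1) * a 0 * a 0 * a 2 * c 1 * c 2 * d 2 + (1) * a 0 * a 0 * a 2 * c 1 * c 1 * d 1 + (1) * a 0 * a 0 * a 2 * c 0 * c 1 * d 0 + (1) * a 0 * a 0 * a 1 * c 1 * c 2 * d 1 + (-1) * a 0 * a 0 * a 1 * c 1 * c 1 * d 2 + (-1) * a 0 * a 0 * a 1 * c 0 * c 2 * d 0 + (1) * a 0 * a 0 * a 1 * c 0 * c 0 * d 2 + (-1) * a 0 * a 0 * a 0 * c 1 * c 2 * d 0 + (2) * a 0 * a 0 * a 0 * c 0 * c 2 * d 1 + (-1) * a 0 * a 0 * a 0 * c 0 * c 1 * d 2)) * hB + (-((2) * a 0 * a 1 * a 2 * b 1 * b 1 * d 0 + (-1) * a 0 * a 1 * a 2 * b 0 * b 2 * d 2 + (-1) * a 0 * a 1 * a 2 * b 0 * b 1 * d 1 + (1) * a 0 * a 1 * a 2 * b 0 * b 0 * d 0 + (-2) * a 0 * a 1 * a 1 * b 1 * b 2 * d 0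 + (1) * a 0 * a 1 * a 1 * b 0 * b 2 * d 1 + (1) * a 0 * a 1 * a 1 * b 0 * b 1 * d 2 + (1) * a 0 * a 0 * a 2 * b 1 * b 2 * d 2 + (-1) * a 0 * a 0 * a 2 * b 1 * b 1 * d 1 + (1) * a 0 * a 0 * a 2 * b 0 * b 1 * d 0 + (-2) * a 0 * a 0 * a 2 * b 0 * b 0 * d 1 + (1) * a 0 * a 0 * a 1 * b 1 * b 2 * d 1 + (-1) * a 0 * a 0 * a 1 * b 1 * b 1 * d 2 + (-1) * a 0 * a 0 * a 1 * b 0 * b 2 * d 0 + (1) * a 0 * a 0 * a 1 * b 0 * b 0 * d 2 + (-1) * a 0 * a 0 * a 0 * b 1 * b 2 * d 0 + (2) * a 0 * a 0 * a 0 * b 0 * b 2 * d 1 + (-1) * a 0 * a 0 * a 0 * b 0 * b 1 * d 2)) * hC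

private lemma core1 (a b c d : Fin 3 → ℝ)
  (hA : a 0 * a 0 + a 1 * a 1 - a 2 * a 2 = 0)
  (hB : b 0 * b 0 + b 1 * b 1 - b 2 * b 2 = 0)
  (hC : c 0 * c 0 + c 1 * c 1 - c 2 * c 2 = 0) :
  2 * (a 0 * b 0 + a 1 * b 1 - a 2 * b 2) * (a 0 * c 0 + a 1 * c 1 - a 2 * c 2) * (b 0 * c 0 + b 1 * c 1 - b 2 * c 2) * (d 2 * a 0 - d 0 * a 2) =
    ((a 0 * d 0 + a 1 * d 1 - a 2 * d 2) * (b 0 * c 0 + b 1 * c 1 - b 2 * c 2) - ((d 1 * a 2 - d 2 * a 1) * (c 1 * b 2 - c 2 * b 1) + (d 2 * a 0 - d 0 * a 2) * (c 2 * b 0 - c 0 * b 2) - (-(d 0 * a 1 - d 1 * a 0)) * (-(c 0 * b 1 - c 1 * b 0)))) * (a 0 * c 0 + a 1 * c 1 - a 2 * c 2) * (b 2 * a 0 - b 0 * a 2) +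
    ((a 0 * d 0 + a 1 * d 1 - a 2 * d 2) * (b 0 * c 0 + b 1 * c 1 - b 2 * c 2) + ((d 1 * a 2 - d 2 * a 1) * (c 1 * b 2 - c 2 * b 1) + (d 2 * a 0 - d 0 * a 2) * (c 2 * b 0 - c 0 * b 2) - (-(d 0 * a 1 - d 1 * a 0)) * (-(c 0 * b 1 - c 1 * b 0)))) * (a 0 * b 0 + a 1 * b 1 - a 2 * b 2) * (c 2 * a 0 - c 0 * a 2) := by
  linear_combination (-((2) * a 2 * b 2 * b 2 * c 2 * c 2 * d 0 + (-1) * a 2 * b 2 * b 2 * c 0 * c 2 * d 2 + (-1) * a 2 * b 2 * b 2 * c 0 * c 1 * d 1 + (-1) * a 2 * b 2 * b 2 * c 0 * c 0 * d 0 + (-2) * a 2 * b 1 * b 2 * c 1 * c 2 * d 0 + (1) * a 2 * b 1 * b 2 * c 0 * c 2 * d 1 + (1) * a 2 * b 1 * b 2 * c 0 * c 1 * d 2 + (-1) * a 2 * b 0 * b 2 * c 2 * c 2 * d 2 + (1) * a 2 * b 0 * b 2 * c 1 * c 2 * d 1 + (1) * a 2 * b 0 * b 2 * c 0 * c 0 *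 d 2 + (-1) * a 2 * b 0 * b 1 * c 2 * c 2 * d 1 + (1) * a 2 * b 0 * b 1 * c 1 * c 2 * d 2 + (-1) * a 2 * b 0 * b 0 * c 2 * c 2 * d 0 + (1) * a 2 * b 0 * b 0 * c 0 * c 2 * d 2 + (-2) * a 1 * b 2 * b 2 * c 1 * c 2 * d 0 + (1) * a 1 * b 2 * b 2 * c 0 * c 2 * d 1 + (1) * a 1 * b 2 * b 2 * c 0 * c 1 * d 2 + (-2) * a 1 * b 1 * b 2 * c 2 * c 2 * d 0 + (2) * a 1 * b 1 * b 2 * c 1 * c 1 * d 0 + (2) * a 1 * b 1 * b 2 * c 0 * c 0 * d 0 + (2) * a 1 * b 1 * b 1 * c 1 * c 2 * d 0 + (-1) * a 1 * b 1 * b 1 * c 0 * c 2 * d 1 + (-1) * a 1 * b 1 * b 1 * c 0 * c 1 * d 2 + (1) * a 1 * b 0 * b 2 * c 2 * c 2 * d 1 + (-1) * a 1 * b 0 * b 2 * c 1 * c 1 * d 1 + (-1) * a 1 * b 0 * b 2 * c 0 * c 0 * d 1 + (1) * a 1 * b 0 * b 1 * c 2 * c 2 * d 2 + (-1) * a 1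 * b 0 * b 1 * c 1 * c 1 * d 2 + (-1) * a 1 * b 0 * b 1 * c 0 * c 0 * d 2 + (2) * a 1 * b 0 * b 0 * c 1 * c 2 * d 0 + (-1) * a 1 * b 0 * b 0 * c 0 * c 2 * d 1 + (-1) * a 1 * b 0 * b 0 * c 0 * c 1 * d 2 + (-1) * a 0 * b 2 * b 2 * c 0 * c 2 * d 0 + (1) * a 0 * b 2 * b 2 * c 0 * c 0 * d 2 + (1) * a 0 * b 1 * b 2 * c 0 * c 1 * d 0 + (-1) * a 0 * b 1 * b 2 * c 0 * c 0 * d 1 + (-1) * a 0 * b 0 * b 2 * c 2 * c 2 * d 0 + (1) * a 0 * b 0 * b 2 * c 0 * c 1 * d 1 + (1) * a 0 * b 0 * b 2 * c 0 * c 0 * d 0 + (1) * a 0 * b 0 * b 1 * c 1 * c 2 * d 0 + (1) * a 0 * b 0 * b 1 * c 0 * c 2 * d 1 + (-2) * a 0 * b 0 * b 1 * c 0 * c 1 * d 2 + (1) * a 0 * b 0 * b 0 * c 2 * c 2 * d 2 + (-1) * a 0 * b 0 * b 0 * c 1 * c 2 * d 1 + (1) * a 0 * b 0 * b 0 * c 0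 * c 2 * d 0 + (-2) * a 0 * b 0 * b 0 * c 0 * c 0 * d 2)) * hA + (-((2) * a 1 * a 1 * a 2 * c 2 * c 2 * d 0 + (-1) * a 1 * a 1 * a 2 * c 0 * c 2 * d 2 + (-1) * a 1 * a 1 * a 2 * c 0 * c 1 * d 1 + (-1) * a 1 * a 1 * a 2 * c 0 * c 0 * d 0 + (-2) * a 1 * a 1 * a 1 * c 1 * c 2 * d 0 + (1) * a 1 * a 1 * a 1 * c 0 * c 2 * d 1 + (1) * a 1 * a 1 * a 1 * c 0 * c 1 * d 2 + (-2) * a 0 * a 1 * a 2 * c 2 * c 2 * d 1 + (1) * a 0 * a 1 * a 2 * c 1 * c 2 * d 2 + (1) * a 0 * a 1 * a 2 * c 1 * c 1 * d 1 + (1) * a 0 * a 1 * a 2 * c 0 * c 1 * d 0 + (1) * a 0 * a 1 * a 1 * c 1 * c 2 * d 1 + (-1) * a 0 * a 1 * a 1 * c 1 * c 1 * d 2 + (-1) * a 0 * a 1 * a 1 * c 0 * c 2 * d 0 + (1) * a 0 * a 1 * a 1 * c 0 * c 0 * d 2 + (-1) * a 0 * a 0 * a 1 * c 1 * c 2 *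 d 0 + (2) * a 0 * a 0 * a 1 * c 0 * c 2 * d 1 + (-1) * a 0 * a 0 * a 1 * c 0 * c 1 * d 2)) * hB + (-((2) * a 1 * a 1 * a 2 * b 1 * b 1 * d 0 + (-1) * a 1 * a 1 * a 2 * b 0 * b 2 * d 2 + (-1) * a 1 * a 1 * a 2 * b 0 * b 1 * d 1 + (1) * a 1 * a 1 * a 2 * b 0 * b 0 * d 0 + (-2) * a 1 * a 1 * a 1 * b 1 * b 2 * d 0 + (1) * a 1 * a 1 * a 1 * b 0 * b 2 * d 1 + (1) * a 1 * a 1 * a 1 * b 0 * b 1 * d 2 + (1) * a 0 * a 1 * a 2 * b 1 * b 2 * d 2 + (-1) * a 0 * a 1 * a 2 * b 1 * b 1 * d 1 + (1) * a 0 * a 1 * a 2 * b 0 * b 1 * d 0 + (-2) * a 0 * a 1 * a 2 * b 0 * b 0 * d 1 + (1) * a 0 * a 1 * a 1 * b 1 * b 2 * d 1 + (-1) * a 0 * a 1 * a 1 * b 1 * b 1 * d 2 + (-1) * a 0 * a 1 * a 1 * b 0 * b 2 * d 0 + (1) * a 0 * a 1 * a 1 * b 0 * b 0 * d 2 + (-1)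 * a 0 * a 0 * a 1 * b 1 * b 2 * d 0 + (2) * a 0 * a 0 * a 1 * b 0 * b 2 * d 1 + (-1) * a 0 * a 0 * a 1 * b 0 * b 1 * d 2)) * hC

private lemma core2 (a b c d : Fin 3 → ℝ)
  (hA : a 0 * a 0 + a 1 * a 1 - a 2 * a 2 = 0)
  (hB : b 0 * b 0 + b 1 * b 1 - b 2 * b 2 = 0)
  (hC : c 0 * c 0 + c 1 * c 1 - c 2 * c 2 = 0) :
  2 * (a 0 * b 0 + a 1 * b 1 - a 2 * b 2) * (a 0 * c 0 + a 1 * c 1 - a 2 * c 2) * (b 0 * c 0 + b 1 * c 1 - b 2 * c 2) * (-(d 0 * a 1 - d 1 * a 0)) =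
    ((a 0 * d 0 + a 1 * d 1 - a 2 * d 2) * (b 0 * c 0 + b 1 * c 1 - b 2 * c 2) - ((d 1 * a 2 - d 2 * a 1) * (c 1 * b 2 - c 2 * b 1) + (d 2 * a 0 - d 0 * a 2) * (c 2 * b 0 - c 0 * b 2) - (-(d 0 * a 1 - d 1 * a 0)) * (-(c 0 * b 1 - c 1 * b 0)))) * (a 0 * c 0 + a 1 * c 1 - a 2 * c 2) * (-(b 0 * a 1 - b 1 * a 0)) +
    ((a 0 * d 0 + a 1 * d 1 - a 2 * d 2) * (b 0 * c 0 + b 1 * c 1 - b 2 * c 2) + ((d 1 * a 2 - d 2 * a 1) * (c 1 * b 2 - c 2 * b 1) + (d 2 * a 0 - d 0 * a 2) * (c 2 * b 0 - c 0 * b 2) - (-(d 0 * a 1 - d 1 * a 0)) * (-(c 0 * b 1 - c 1 * b 0)))) * (a 0 * b 0 + a 1 * b 1 - a 2 * b 2) * (-(c 0 * a 1 - c 1 * a 0)) := by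
  linear_combination (-((2) * a 1 * b 2 * b 2 * c 2 * c 2 * d 0 + (-1) * a 1 * b 2 * b 2 * c 0 * c 2 * d 2 + (-1) * a 1 * b 2 * b 2 * c 0 * c 1 * d 1 + (-1) * a 1 * b 2 * b 2 * c 0 * c 0 * d 0 + (-2) * a 1 * b 1 * b 2 * c 1 * c 2 * d 0 + (1) * a 1 * b 1 * b 2 * c 0 * c 2 * d 1 + (1) * a 1 * b 1 * b 2 * c 0 * c 1 * d 2 + (-1) * a 1 * b 0 * b 2 * c 2 * c 2 * d 2 + (1) * a 1 * b 0 * b 2 * c 1 * c 2 * d 1 + (1) * a 1 * b 0 * b 2 * c 0 * c 0 * d 2 + (-1) * a 1 * b 0 * b 1 * c 2 * c 2 * d 1 + (1) * a 1 * b 0 * b 1 * c 1 * c 2 * d 2 + (-1) * a 1 * b 0 * b 0 * c 2 * c 2 * d 0 + (1) * a 1 * b 0 * b 0 * c 0 * c 2 * d 2 + (-2) * a 0 * b 2 * b 2 * c 2 * c 2 * d 1 + (1) * a 0 * b 2 * b 2 * c 1 * c 2 * d 2 + (1) * a 0 * b 2 * b 2 * c 1 * c 1 * d 1 + (1) * a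 0 * b 2 * b 2 * c 0 * c 1 * d 0 + (1) * a 0 * b 1 * b 2 * c 2 * c 2 * d 2 + (-1) * a 0 * b 1 * b 2 * c 1 * c 1 * d 2 + (-1) * a 0 * b 1 * b 2 * c 0 * c 2 * d 0 + (1) * a 0 * b 1 * b 1 * c 2 * c 2 * d 1 + (-1) * a 0 * b 1 * b 1 * c 1 * c 2 * d 2 + (-1) * a 0 * b 0 * b 2 * c 1 * c 2 * d 0 + (2) * a 0 * b 0 * b 2 * c 0 * c 2 * d 1 + (-1) * a 0 * b 0 * b 2 * c 0 * c 1 * d 2 + (1) * a 0 * b 0 * b 1 * c 2 * c 2 * d 0 + (-1) * a 0 * b 0 * b 1 * c 0 * c 2 * d 2)) * hA + (-((-2) * a 1 * a 1 * a 2 * c 1 * c 2 * d 0 + (1) * a 1 * a 1 * a 2 * c 0 * c 2 * d 1 + (1) * a 1 * a 1 * a 2 * c 0 * c 1 * d 2 + (2) * a 1 * a 1 * a 1 * c 2 * c 2 * d 0 + (-1) * a 1 * a 1 * a 1 * c 0 * c 2 * d 2 + (-1) * a 1 * a 1 * a 1 * c 0 * c 1 * d 1 + (-1) * a 1 * a 1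 * a 1 * c 0 * c 0 * d 0 + (1) * a 0 * a 1 * a 2 * c 1 * c 2 * d 1 + (-1) * a 0 * a 1 * a 2 * c 1 * c 1 * d 2 + (-1) * a 0 * a 1 * a 2 * c 0 * c 2 * d 0 + (1) * a 0 * a 1 * a 2 * c 0 * c 0 * d 2 + (-2) * a 0 * a 1 * a 1 * c 2 * c 2 * d 1 + (1) * a 0 * a 1 * a 1 * c 1 * c 2 * d 2 + (1) * a 0 * a 1 * a 1 * c 1 * c 1 * d 1 + (1) * a 0 * a 1 * a 1 * c 0 * c 1 * d 0 + (-1) * a 0 * a 0 * a 2 * c 1 * c 2 * d 0 + (2) * a 0 * a 0 * a 2 * c 0 * c 2 * d 1 + (-1) * a 0 * a 0 * a 2 * c 0 * c 1 * d 2 + (2) * a 0 * a 0 * a 1 * c 2 * c 2 * d 0 + (-1) * a 0 * a 0 * a 1 * c 0 * c 2 * d 2 + (-1) * a 0 * a 0 * a 1 * c 0 * c 1 * d 1 + (-1) * a 0 * a 0 * a 1 * c 0 * c 0 * d 0 + (-2) * a 0 * a 0 * a 0 * c 2 * c 2 * d 1 + (1) * a 0 * a 0 * a 0 * c 1 * c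 2 * d 2 + (1) * a 0 * a 0 * a 0 * c 1 * c 1 * d 1 + (1) * a 0 * a 0 * a 0 * c 0 * c 1 * d 0)) * hB + (-((-2) * a 1 * a 1 * a 2 * b 1 * b 2 * d 0 + (1) * a 1 * a 1 * a 2 * b 0 * b 2 * d 1 + (1) * a 1 * a 1 * a 2 * b 0 * b 1 * d 2 + (2) * a 1 * a 1 * a 1 * b 1 * b 1 * d 0 + (-1) * a 1 * a 1 * a 1 * b 0 * b 2 * d 2 + (-1) * a 1 * a 1 * a 1 * b 0 * b 1 * d 1 + (1) * a 1 * a 1 * a 1 * b 0 * b 0 * d 0 + (1) * a 0 * a 1 * a 2 * b 1 * b 2 * d 1 + (-1) * a 0 * a 1 * a 2 * b 1 * b 1 * d 2 + (-1) * a 0 * a 1 * a 2 * b 0 * b 2 * d 0 + (1) * a 0 * a 1 * a 2 * b 0 * b 0 * d 2 + (1) * a 0 * a 1 * a 1 * b 1 * b 2 * d 2 + (-1) * a 0 * a 1 * a 1 * b 1 * b 1 * d 1 + (1) * a 0 * a 1 * a 1 * b 0 * b 1 * d 0 + (-2) * a 0 * a 1 * a 1 * b 0 * b 0 * d 1 +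 (-1) * a 0 * a 0 * a 2 * b 1 * b 2 * d 0 + (2) * a 0 * a 0 * a 2 * b 0 * b 2 * d 1 + (-1) * a 0 * a 0 * a 2 * b 0 * b 1 * d 2 + (2) * a 0 * a 0 * a 1 * b 1 * b 1 * d 0 + (-1) * a 0 * a 0 * a 1 * b 0 * b 2 * d 2 + (-1) * a 0 * a 0 * a 1 * b 0 * b 1 * d 1 + (1) * a 0 * a 0 * a 1 * b 0 * b 0 * d 0 + (1) * a 0 * a 0 * a 0 * b 1 * b 2 * d 2 + (-1) * a 0 * a 0 * a 0 * b 1 * b 1 * d 1 + (1) * a 0 * a 0 * a 0 * b 0 * b 1 * d 0 + (-2) * a 0 * a 0 * a 0 * b 0 * b 0 * d 1)) * hC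


/-- The cross-ratio `b(a,b,c,d) = (1/2)(1 + ⟨ν(a,d), ν(b,c)⟩)`. -/
def bcr (a b c d : V3) : ℝ := (1 + mink (nu a d) (nu b c)) / 2

set_option maxHeartbeats 1000000 in
set_option maxRecDepth 10000 in
/-- the identity `ν(a,d) = b(d,b,c,a)·ν(a,b) + b(a,b,c,d)·ν(a,c)`
for pairwise distinct boundary points. -/
theorem nu_decomposition (a b c d : V3)
    (ha : FutureNull a) (hb : FutureNull b) (hc : FutureNull c) (hd : FutureNull d)
    (hab : DistinctRays a b) (hac : DistinctRays a c) (had : DistinctRays a d)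
    (hbc : DistinctRays b c) (hbd : DistinctRays b d) (hcd : DistinctRays c d) :
    nu a d = bcr d b c a • nu a b + bcr a b c d • nu a c := by
  have nab := mink_neg a b ha hb hab
  have nac := mink_neg a c ha hc hac
  have nad := mink_neg a d ha hd had
  have nbc := mink_neg b c hb hc hbc
  have hcomm : mink d a = mink a d := by simp only [mink]; ring
  have nda : mink d a < 0 := by rw [hcomm]; exact nad
  have s_ad := sqrt_eq a d ha hd nad
  have s_da := sqrt_eq d a hd ha nda
  have s_ab := sqrt_eq a b ha hb nab
  have s_ac := sqrt_eq a c ha hc nac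
  have s_bc := sqrt_eq b c hb hc nbc
  have hA : a 0 * a 0 + a 1 * a 1 - a 2 * a 2 = 0 := ha.1
  have hB : b 0 * b 0 + b 1 * b 1 - b 2 * b 2 = 0 := hb.1
  have hC : c 0 * c 0 + c 1 * c 1 - c 2 * c 2 = 0 := hc.1
  have Gswap : mink (crossM a d) (crossM c b) = -(mink (crossM d a) (crossM c b)) := by
    simp only [mink, crossM, Matrix.cons_val_zero, Matrix.cons_val_one,
      Matrix.head_cons, Matrix.cons_val_two, Matrix.tail_cons]
    ring
  have m0 :
      2 * mink a b * mink a c * mink b c * crossM d a 0 =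
        (mink a d * mink b c - mink (crossM d a) (crossM c b)) * mink a c * crossM b a 0 +
        (mink a d * mink b c + mink (crossM d a) (crossM c b)) * mink a b * crossM c a 0 := by
    simp only [mink, crossM, Matrix.cons_val_zero, Matrix.cons_val_one,
      Matrix.head_cons, Matrix.cons_val_two, Matrix.tail_cons]
    linear_combination core0 a b c d hA hB hC
  have m1 :
      2 * mink a b * mink a c * mink b c * crossM d a 1 =
        (mink a d * mink b c - mink (crossM d a) (crossM c b)) * mink a c * crossM b a 1 +
        (mink a d * mink b c + mink (crossM d a) (crossM c b)) * mink a b * crossM c a 1 := by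
    simp only [mink, crossM, Matrix.cons_val_zero, Matrix.cons_val_one,
      Matrix.head_cons, Matrix.cons_val_two, Matrix.tail_cons]
    linear_combination core1 a b c d hA hB hC
  have m2 :
      2 * mink a b * mink a c * mink b c * crossM d a 2 =
        (mink a d * mink b c - mink (crossM d a) (crossM c b)) * mink a c * crossM b a 2 +
        (mink a d * mink b c + mink (crossM d a) (crossM c b)) * mink a b * crossM c a 2 := by
    simp only [mink, crossM, Matrix.cons_val_zero, Matrix.cons_val_one,
      Matrix.head_cons, Matrix.cons_val_two, Matrix.tail_cons]
    linear_combination core2 a b c d hA hB hC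
  have main : ∀ i : Fin 3,
      2 * mink a b * mink a c * mink b c * crossM d a i =
        (mink a d * mink b c - mink (crossM d a) (crossM c b)) * mink a c * crossM b a i +
        (mink a d * mink b c + mink (crossM d a) (crossM c b)) * mink a b * crossM c a i := by
    intro i
    fin_cases i
    · exact m0
    · exact m1
    · exact m2
  have eab : mink a b ≠ 0 := ne_of_lt nab
  have eac : mink a c ≠ 0 := ne_of_lt nac
  have ead : mink a d ≠ 0 := ne_of_lt nad
  have ebc : mink b c ≠ 0 := ne_of_lt nbc
  funext i
  have hm := main i
  simp only [bcr, nu, s_ad, s_da, s_ab, s_ac, s_bc, hcomm, mink_smul, Gswap,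
    Pi.add_apply, Pi.smul_apply, smul_eq_mul]
  field_simp
  linear_combination (-1) * hm
end
end

section
/- Let k: R × X → R (for X a set with a map φ: R × X → X satisfying φ_t∘φ_s = φ_{t+s}) satisfy the additive cocycle identity k_{t+t'}(x) = k_t(φ_{t'} x) + k_{t'}(x) for all t, t' ∈ R and x ∈ X, with each t ↦ k_t(x) continuous. Fix r > 0 and define K_t(x) = log( ∫_t^{r+t} exp(k_s(x)) ds / ∫_0^r exp(k_s(x)) ds ). Then K also satisfies the cocycle identity K_{t+t'}(x) = K_t(φ_{t'} x) + K_{t'}(x), and moreover ∂/∂t|_{t=0} K_t(x) = (exp(k_r(x)) − exp(k_0(x))) / ∫_0^r exp(k_s(x)) ds. -/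
noncomputable section

open MeasureTheory

/-- given a continuous additive cocycle `k` over a flow `φ`,
the averaged function `K_t(x) = log(∫_t^{r+t} e^{k_s(x)} ds / ∫_0^r e^{k_s(x)} ds)`
is again an additive cocycle over `φ`, and its derivative in `t` at `t = 0` is
`(e^{k_r(x)} − e^{k_0(x)}) / ∫_0^r e^{k_s(x)} ds`. -/
theorem averaged_cocycle {X : Type*} (φ : ℝ → X → X)
    (hflow : ∀ (t s : ℝ) (x : X), φ t (φ s x) = φ (t + s) x)
    (k : ℝ → X → ℝ)
    (hcoc : ∀ (t t' : ℝ) (x : X), k (t + t') x = k t (φ t' x) + k t' x)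
    (hcont : ∀ x : X, Continuous fun t : ℝ => k t x)
    (r : ℝ) (hr : 0 < r)
    (K : ℝ → X → ℝ)
    (hK : ∀ (t : ℝ) (x : X), K t x =
      Real.log ((∫ s in t..(r + t), Real.exp (k s x)) /
        ∫ s in (0 : ℝ)..r, Real.exp (k s x))) :
    (∀ (t t' : ℝ) (x : X), K (t + t') x = K t (φ t' x) + K t' x) ∧
    (∀ x : X, HasDerivAt (fun t : ℝ => K t x)
      ((Real.exp (k r x) - Real.exp (k 0 x)) / ∫ s in (0 : ℝ)..r, Real.exp (k s x)) 0) := by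
  -- continuity of the integrand
  have hfc : ∀ x : X, Continuous fun s : ℝ => Real.exp (k s x) :=
    fun x => Real.continuous_exp.comp (hcont x)
  -- positivity of the integrals
  have hFpos : ∀ (x : X) (a b : ℝ), a < b → 0 < ∫ s in a..b, Real.exp (k s x) := by
    intro x a b hab
    exact intervalIntegral.intervalIntegral_pos_of_pos ((hfc x).intervalIntegrable a b)
      (fun s => Real.exp_pos _) hab
  have hFpos' : ∀ (x : X) (t : ℝ), 0 < ∫ s in t..(r + t), Real.exp (k s x) := by
    intro x t
    exact hFpos x t (r + t) (by linarith)
  -- K t x = log F(t) - log F(0)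
  have hKlog : ∀ (t : ℝ) (x : X), K t x =
      Real.log (∫ s in t..(r + t), Real.exp (k s x)) -
      Real.log (∫ s in (0 : ℝ)..r, Real.exp (k s x)) := by
    intro t x
    rw [hK t x, Real.log_div (ne_of_gt (hFpos' x t)) (ne_of_gt (hFpos x 0 r hr))]
  -- shift formula: F_{φ_{t'} x}(t) = e^{-k_{t'} x} F_x (t + t')
  have hshift : ∀ (t t' : ℝ) (x : X),
      (∫ s in t..(r + t), Real.exp (k s (φ t' x))) =
      Real.exp (-(k t' x)) * ∫ s in (t + t')..(r + (t + t')), Real.exp (k s x) := by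
    intro t t' x
    have h1 : ∀ s : ℝ, Real.exp (k s (φ t' x)) =
        Real.exp (-(k t' x)) * Real.exp (k (s + t') x) := by
      intro s
      rw [← Real.exp_add]
      congr 1
      have := hcoc s t' x
      linarith
    calc (∫ s in t..(r + t), Real.exp (k s (φ t' x)))
        = ∫ s in t..(r + t), Real.exp (-(k t' x)) * Real.exp (k (s + t') x) := by
          simp_rw [h1]
      _ = Real.exp (-(k t' x)) * ∫ s in t..(r + t), Real.exp (k (s + t') x) := by
          rw [intervalIntegral.integral_const_mul]
      _ = Real.exp (-(k t' x)) * ∫ s in (t + t')..(r + (t + t')), Real.exp (k s x) := by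
          rw [intervalIntegral.integral_comp_add_right (fun s => Real.exp (k s x)) t']
          ring_nf
  constructor
  · intro t t' x
    have e1 := hKlog (t + t') x
    have e2 := hKlog t (φ t' x)
    have e3 := hKlog t' x
    rw [e1, e2, e3, hshift t t' x]
    rw [Real.log_mul (ne_of_gt (Real.exp_pos _)) (ne_of_gt (hFpos' x (t + t')))]
    have hs0 := hshift 0 t' x
    simp only [zero_add, add_zero] at hs0
    -- the denominator ∫_0^r e^{k_s(φ_{t'} x)}
    have : Real.log (∫ s in (0:ℝ)..r, Real.exp (k s (φ t' x))) =
        Real.log (Real.exp (-(k t' x))) + Real.log (∫ s in t'..(r + t'), Real.exp (k s x)) := by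
      rw [hs0, Real.log_mul (ne_of_gt (Real.exp_pos _)) (ne_of_gt (hFpos' x t'))]
    rw [this]
    ring
  · intro x
    set f : ℝ → ℝ := fun s => Real.exp (k s x) with hf
    set C : ℝ := ∫ s in (0:ℝ)..r, f s with hC
    have hCpos : 0 < C := hFpos x 0 r hr
    -- G u = ∫_0^u f has derivative f u
    have hG : ∀ u : ℝ, HasDerivAt (fun v : ℝ => ∫ s in (0:ℝ)..v, f s) (f u) u := by
      intro u
      exact intervalIntegral.integral_hasDerivAt_right
        ((hfc x).intervalIntegrable 0 u)
        ((hfc x).stronglyMeasurableAtFilter _ _)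
        (hfc x).continuousAt
    -- F t = ∫_t^{r+t} f = G(r+t) - G(t)
    have hGr : HasDerivAt (fun t : ℝ => ∫ s in (0:ℝ)..(r + t), f s) (f r) 0 := by
      have h0 : HasDerivAt (fun t : ℝ => r + t) 1 0 := (hasDerivAt_id (0:ℝ)).const_add r
      have := (hG (r + 0)).comp (0:ℝ) h0
      simp only [add_zero, mul_one] at this
      exact this
    have hGt : HasDerivAt (fun t : ℝ => ∫ s in (0:ℝ)..t, f s) (f 0) 0 := hG 0
    have hF : HasDerivAt (fun t : ℝ => ∫ s in t..(r + t), f s) (f r - f 0) 0 := by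
      have heq : (fun t : ℝ => ∫ s in t..(r + t), f s) =
          fun t : ℝ => (∫ s in (0:ℝ)..(r + t), f s) - ∫ s in (0:ℝ)..t, f s := by
        funext t
        rw [eq_sub_iff_add_eq]
        have h2 := intervalIntegral.integral_add_adjacent_intervals
          ((hfc x).intervalIntegrable (μ := volume) t 0)
          ((hfc x).intervalIntegrable (μ := volume) 0 (r + t))
        have h3 : (∫ s in (0:ℝ)..t, f s) = -∫ s in t..(0:ℝ), f s := by
          rw [intervalIntegral.integral_symm]
        simp only [hf] at h3 ⊢
        linarith [h2, h3]
      rw [heq]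
      exact hGr.sub hGt
    have hF0 : (∫ s in (0:ℝ)..(r + 0), f s) = C := by rw [add_zero]
    have hlog : HasDerivAt (fun t : ℝ => Real.log (∫ s in t..(r + t), f s))
        ((f r - f 0) / C) 0 := by
      have := hF.log (by rw [hF0]; exact ne_of_gt hCpos)
      rwa [hF0] at this
    have heqK : (fun t : ℝ => K t x) =
        fun t : ℝ => Real.log (∫ s in t..(r + t), f s) - Real.log C := by
      funext t; exact hKlog t x
    rw [heqK]
    exact hlog.sub_const _
end
end
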